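/- Let H be a complex Hilbert space and G as above with Im⟨G(w)v,v⟩ = 0 for all v, w. Define iterates u^[0](t) = u(t_n) (constant) and i ∂_t u^[k+1] = G(u^[k](t)) u^[k+1], u^[k+1](t_n) = u(t_n). Assume G is Lipschitz on a ball containing all iterates and u, with Lipschitz constant L (in operator norm applied to u: ‖(G(v)−G(w))u‖ ≤ L‖v−w‖·‖u‖ say). If ρ_k(t) := ‖u^[k](t) − u(t)‖ satisfies ρ_1(t) ≤ c₁ h^{p₁+1} on [t_n, t_n+h], then ρ_k(t) ≤ (L‖u‖)^{k−1} c₁ h^{p₁+k} for all k ≥ 1, where ‖u‖ bounds sup_t ‖u(t)‖. In particular the iteration converges as k → ∞ whenever h < (L‖u‖)^{-1}. -/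

import Mathlib

open Complex InnerProductSpace

local notation "⟪" x ", " y "⟫" => @inner ℂ _ _ x y

lemma skew_gronwall_step
    {H : Type*} [NormedAddCommGroup H] [InnerProductSpace ℂ H]
    (G : H → (H →L[ℂ] H))
    (hG : ∀ w v : H, (inner ℂ (G w v) v : ℂ).im = 0)
    (tn h : ℝ) (hh : 0 ≤ h)
    (z v u : ℝ → H)
    (hv : ∀ t : ℝ, HasDerivAt v ((-Complex.I) • (G (z t) (v t))) t)
    (hu : ∀ t : ℝ, HasDerivAt u ((-Complex.I) • (G (u t) (u t))) t)
    (hinit : v tn = u tn)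
    (ε : ℝ) (hε : 0 ≤ ε)
    (hbound : ∀ t ∈ Set.Icc tn (tn + h), ‖(G (z t) - G (u t)) (u t)‖ ≤ ε) :
    ∀ t ∈ Set.Icc tn (tn + h), ‖v t - u t‖ ≤ ε * h := by
  set d : ℝ → H := fun t => v t - u t with hd_def
  set e : ℝ → H := fun t => (G (z t) - G (u t)) (u t) with he_def
  have hd : ∀ t : ℝ, HasDerivAt d
      ((-Complex.I) • (G (z t) (d t)) + (-Complex.I) • (e t)) t := by
    intro t
    have := (hv t).sub (hu t)
    convert this using 1
    · rfl
    simp only [hd_def, he_def, ContinuousLinearMap.sub_apply, map_sub, smul_sub]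
    abel
  have hf : ∀ t : ℝ, HasDerivAt (fun s => ‖d s‖ ^ 2)
      (2 * (⟪d t, (-Complex.I) • (G (z t) (d t)) + (-Complex.I) • (e t)⟫).re) t := by
    intro t
    have h1 := HasDerivAt.inner ℂ (hd t) (hd t)
    have h2 := (Complex.reCLM.hasFDerivAt (x := ⟪d t, d t⟫)).comp_hasDerivAt t h1
    have heq : (⇑Complex.reCLM ∘ fun s => ⟪d s, d s⟫) = fun s => ‖d s‖ ^ 2 := by
      funext s
      simp only [Function.comp_apply]
      simpa using (inner_self_eq_norm_sq (𝕜 := ℂ) (d s))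
    rw [heq] at h2
    refine h2.congr_deriv ?_
    have : ⟪(-Complex.I) • (G (z t) (d t)) + (-Complex.I) • (e t), d t⟫
        = starRingEnd ℂ ⟪d t, (-Complex.I) • (G (z t) (d t)) + (-Complex.I) • (e t)⟫ := by
      rw [inner_conj_symm]
    simp only [Complex.reCLM_apply, Complex.add_re, this, Complex.conj_re]
    ring
  -- the skew part contributes nothing to the real part
  have hre : ∀ t : ℝ, (⟪d t, (-Complex.I) • (G (z t) (d t)) + (-Complex.I) • (e t)⟫).re
      = (⟪d t, (-Complex.I) • (e t)⟫).re := by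
    intro t
    rw [inner_add_right, Complex.add_re]
    have him : (⟪d t, G (z t) (d t)⟫).im = 0 := by
      rw [← inner_conj_symm, Complex.conj_im, hG, neg_zero]
    have h0 : (⟪d t, (-Complex.I) • (G (z t) (d t))⟫).re = 0 := by
      rw [inner_smul_right]
      simp [Complex.mul_re, him]
    rw [h0, zero_add]
  have habs : ∀ t ∈ Set.Icc tn (tn + h),
      |2 * (⟪d t, (-Complex.I) • (G (z t) (d t)) + (-Complex.I) • (e t)⟫).re|
        ≤ 2 * ‖d t‖ * ε := by
    intro t ht
    rw [hre t, abs_mul]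
    have habs2 : |(2:ℝ)| = 2 := by norm_num
    rw [habs2]
    have h1 : |(⟪d t, (-Complex.I) • (e t)⟫).re| ≤ ‖d t‖ * ε := by
      calc |(⟪d t, (-Complex.I) • (e t)⟫).re| ≤ ‖(⟪d t, (-Complex.I) • (e t)⟫ : ℂ)‖ :=
            Complex.abs_re_le_norm _
        _ ≤ ‖d t‖ * ‖(-Complex.I) • (e t)‖ := norm_inner_le_norm _ _
        _ = ‖d t‖ * ‖e t‖ := by rw [norm_smul]; simp
        _ ≤ ‖d t‖ * ε := by
            exact mul_le_mul_of_nonneg_left (hbound t ht) (norm_nonneg _)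
    calc 2 * |(⟪d t, (-Complex.I) • (e t)⟫).re| ≤ 2 * (‖d t‖ * ε) := by linarith
      _ = 2 * ‖d t‖ * ε := by ring
  have key : ∀ η : ℝ, 0 < η → ∀ t ∈ Set.Icc tn (tn + h), ‖d t‖ ≤ ε * h + η := by
    intro η hη
    set g : ℝ → ℝ := fun s => Real.sqrt (‖d s‖ ^ 2 + η ^ 2) with hg_def
    have hpos : ∀ s : ℝ, 0 < ‖d s‖ ^ 2 + η ^ 2 := fun s => by positivity
    have hg : ∀ s : ℝ, HasDerivAt g
        ((1 / (2 * Real.sqrt (‖d s‖ ^ 2 + η ^ 2))) *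
          (2 * (⟪d s, (-Complex.I) • (G (z s) (d s)) + (-Complex.I) • (e s)⟫).re)) s := by
      intro s
      exact (Real.hasDerivAt_sqrt (ne_of_gt (hpos s))).comp s ((hf s).add_const (η ^ 2))
    have hsq : ∀ s : ℝ, ‖d s‖ ≤ Real.sqrt (‖d s‖ ^ 2 + η ^ 2) := by
      intro s
      have := Real.sqrt_le_sqrt (le_add_of_nonneg_right (sq_nonneg η) : ‖d s‖ ^ 2 ≤ ‖d s‖ ^ 2 + η ^ 2)
      rwa [Real.sqrt_sq (norm_nonneg _)] at this
    have hbnd : ∀ s ∈ Set.Icc tn (tn + h),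
        ‖(1 / (2 * Real.sqrt (‖d s‖ ^ 2 + η ^ 2))) *
          (2 * (⟪d s, (-Complex.I) • (G (z s) (d s)) + (-Complex.I) • (e s)⟫).re)‖ ≤ ε := by
      intro s hs
      have hsqrt_pos : 0 < Real.sqrt (‖d s‖ ^ 2 + η ^ 2) := Real.sqrt_pos.2 (hpos s)
      rw [Real.norm_eq_abs, abs_mul]
      have h1 : |1 / (2 * Real.sqrt (‖d s‖ ^ 2 + η ^ 2))|
          = 1 / (2 * Real.sqrt (‖d s‖ ^ 2 + η ^ 2)) := abs_of_pos (by positivity)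
      rw [h1, div_mul_eq_mul_div, one_mul, div_le_iff₀ (by positivity)]
      calc |2 * (⟪d s, (-Complex.I) • (G (z s) (d s)) + (-Complex.I) • (e s)⟫).re|
          ≤ 2 * ‖d s‖ * ε := habs s hs
        _ ≤ 2 * Real.sqrt (‖d s‖ ^ 2 + η ^ 2) * ε := by
            have := hsq s
            nlinarith
        _ = ε * (2 * Real.sqrt (‖d s‖ ^ 2 + η ^ 2)) := by ring
    intro t ht
    have hmvt := (convex_Icc tn (tn + h)).norm_image_sub_le_of_norm_hasDerivWithin_le
      (f := g) (f' := fun s => (1 / (2 * Real.sqrt (‖d s‖ ^ 2 + η ^ 2))) *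
        (2 * (⟪d s, (-Complex.I) • (G (z s) (d s)) + (-Complex.I) • (e s)⟫).re))
      (fun s hs => (hg s).hasDerivWithinAt) hbnd
      (Set.left_mem_Icc.2 (by linarith)) ht
    have hgtn : g tn = η := by
      have : d tn = 0 := by simp [hd_def, hinit]
      simp [hg_def, this, Real.sqrt_sq hη.le]
    have hdist : ‖t - tn‖ ≤ h := by
      rw [Real.norm_eq_abs, _root_.abs_of_nonneg (show (0:ℝ) ≤ t - tn by linarith [ht.1])]
      linarith [ht.2]
    have hgt : g t ≤ ε * h + η := by
      have h2 : g t - g tn ≤ ε * ‖t - tn‖ := le_trans (le_abs_self _) hmvt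
      have h3 : ε * ‖t - tn‖ ≤ ε * h := mul_le_mul_of_nonneg_left hdist hε
      rw [hgtn] at h2
      linarith
    exact le_trans (hsq t) hgt
  intro t ht
  exact le_of_forall_pos_le_add (fun η hη => key η hη t ht)

/-- Theorem 2 (convergence of iterated linearisation): each iterate of the
linearised dispersive equation gains one order in `h`, and the iteration
converges geometrically whenever `h < (L‖u‖)⁻¹`. -/
theorem iterated_linearisation_convergence
    {H : Type*} [NormedAddCommGroup H] [InnerProductSpace ℂ H] [CompleteSpace H]
    (G : H → (H →L[ℂ] H))
    (hG : ∀ w v : H, (inner ℂ (G w v) v : ℂ).im = 0)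
    (tn h : ℝ) (hh : 0 < h)
    (u : ℝ → H) (U : ℕ → ℝ → H)
    (hu : ∀ t : ℝ, HasDerivAt u ((-Complex.I) • (G (u t) (u t))) t)
    (hU0 : ∀ t : ℝ, U 0 t = u tn)
    (hUode : ∀ k : ℕ, ∀ t : ℝ,
      HasDerivAt (U (k + 1)) ((-Complex.I) • (G (U k t) (U (k + 1) t))) t)
    (hUinit : ∀ k : ℕ, U (k + 1) tn = u tn)
    (L M c₁ : ℝ) (hL : 0 ≤ L) (hM : 0 ≤ M) (hc₁ : 0 ≤ c₁)
    (hLip : ∀ v w x : H, ‖(G v - G w) x‖ ≤ L * ‖v - w‖ * ‖x‖)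
    (hMbound : ∀ t : ℝ, ‖u t‖ ≤ M)
    (p₁ : ℕ)
    (hρ₁ : ∀ t ∈ Set.Icc tn (tn + h), ‖U 1 t - u t‖ ≤ c₁ * h ^ (p₁ + 1)) :
    (∀ k : ℕ, 1 ≤ k → ∀ t ∈ Set.Icc tn (tn + h),
      ‖U k t - u t‖ ≤ (L * M) ^ (k - 1) * c₁ * h ^ (p₁ + k)) ∧
    (h < (L * M)⁻¹ →
      ∀ t ∈ Set.Icc tn (tn + h),
        Filter.Tendsto (fun k => ‖U k t - u t‖) Filter.atTop (nhds 0)) := by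
  have main : ∀ n : ℕ, ∀ t ∈ Set.Icc tn (tn + h),
      ‖U (n + 1) t - u t‖ ≤ (L * M) ^ n * c₁ * h ^ (p₁ + n + 1) := by
    intro n
    induction n with
    | zero => simpa using hρ₁
    | succ n ih =>
      have hbound : ∀ t ∈ Set.Icc tn (tn + h),
          ‖(G (U (n + 1) t) - G (u t)) (u t)‖
            ≤ (L * M) * ((L * M) ^ n * c₁ * h ^ (p₁ + n + 1)) := by
        intro t ht
        calc ‖(G (U (n + 1) t) - G (u t)) (u t)‖
            ≤ L * ‖U (n + 1) t - u t‖ * ‖u t‖ := hLip _ _ _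
          _ ≤ L * ((L * M) ^ n * c₁ * h ^ (p₁ + n + 1)) * M := by
              apply mul_le_mul
              · exact mul_le_mul_of_nonneg_left (ih t ht) hL
              · exact hMbound t
              · exact norm_nonneg _
              · positivity
          _ = (L * M) * ((L * M) ^ n * c₁ * h ^ (p₁ + n + 1)) := by ring
      have step := skew_gronwall_step G hG tn h hh.le (U (n + 1)) (U (n + 2)) u
        (hUode (n + 1)) hu (hUinit (n + 1))
        ((L * M) * ((L * M) ^ n * c₁ * h ^ (p₁ + n + 1))) (by positivity) hbound
      intro t ht
      calc ‖U (n + 1 + 1) t - u t‖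
          ≤ (L * M) * ((L * M) ^ n * c₁ * h ^ (p₁ + n + 1)) * h := step t ht
        _ = (L * M) ^ (n + 1) * c₁ * h ^ (p₁ + (n + 1) + 1) := by ring
  constructor
  · intro k hk t ht
    obtain ⟨n, rfl⟩ := Nat.exists_eq_add_of_le' hk
    simpa [add_assoc] using main n t ht
  · intro hsmall t ht
    have hLM : 0 < L * M := by
      rcases (mul_nonneg hL hM).lt_or_eq with h1 | h1
      · exact h1
      · exfalso; rw [← h1] at hsmall; simp at hsmall; linarith
    have hr1 : L * M * h < 1 := by
      rw [inv_eq_one_div, lt_div_iff₀ hLM] at hsmall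
      linarith [hsmall]
    have hr0 : 0 ≤ L * M * h := by positivity
    apply squeeze_zero' (g := fun k => (c₁ * h ^ (p₁ + 1)) * (L * M * h) ^ (k - 1))
    · exact Filter.Eventually.of_forall fun k => norm_nonneg _
    · rw [Filter.eventually_atTop]
      refine ⟨1, fun k hk => ?_⟩
      obtain ⟨n, rfl⟩ := Nat.exists_eq_add_of_le' hk
      calc ‖U (n + 1) t - u t‖ ≤ (L * M) ^ n * c₁ * h ^ (p₁ + n + 1) := main n t ht
        _ = (c₁ * h ^ (p₁ + 1)) * (L * M * h) ^ (n + 1 - 1) := by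
            simp only [Nat.add_sub_cancel, mul_pow]
            rw [show p₁ + n + 1 = (p₁ + 1) + n by ring, pow_add]
            ring
    · have := ((tendsto_pow_atTop_nhds_zero_of_lt_one hr0 hr1).comp
        (Filter.tendsto_sub_atTop_nat 1)).const_mul (c₁ * h ^ (p₁ + 1))
      simpa using this
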